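/- Under the zero-laxity condition r_max·Δ_T·Σ_{j=1}^T E_{i,j} = e_i for every i, the optimal values of problem (P1) and of the relaxed problem (P2) with M = I_T and W = r_max·E coincide: p₁* = p₂*, and both minima are attained. -/

import Mathlib

open Matrix Complex

/-- The complex unit `e^{iθπ/180}` at angle `θ` degrees. -/
noncomputable def ang (θ : ℝ) : ℂ := Complex.exp ((θ * Real.pi / 180) * Complex.I)

/-- The matrix `Φ₁` transforming delta phase powers to primary-side line powers. -/
noncomputable def Phi1 : Matrix (Fin 3) (Fin 3) ℂ :=
  !![ang 30, 0, -ang 150;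
     -ang 30, ang (-90), 0;
     0, -ang (-90), ang 150]

/-- The matrix `Φ₂` (with turning ratio `n_r`) transforming delta phase powers to
secondary-side line powers. -/
noncomputable def Phi2 (n_r : ℝ) : Matrix (Fin 3) (Fin 3) ℂ :=
  ((n_r : ℂ))⁻¹ • !![ang 30, ang (-90), -2 * ang 150;
     -2 * ang 30, ang (-90), ang 150;
     ang 30, -2 * ang (-90), ang 150]

/-- `X ∈ 𝒳`: a binary `3 × N` matrix each of whose columns sums to `1`. -/
def memX {N : ℕ} (X : Matrix (Fin 3) (Fin N) ℝ) : Prop :=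
  (∀ m i, X m i = 0 ∨ X m i = 1) ∧ ∀ i, (∑ m, X m i) = 1

/-- `A ∈ C_r`: the charger (maximum-rate) constraint. -/
def memCr {N T : ℕ} (r_max : ℝ) (E : Matrix (Fin N) (Fin T) ℝ)
    (A : Matrix (Fin N) (Fin T) ℝ) : Prop :=
  ∀ i j, 0 ≤ A i j ∧ A i j ≤ r_max * E i j

/-- `A ∈ C_d`: the energy-demand constraint. -/
def memCd {N T : ℕ} (Δ : ℝ) (e : Fin N → ℝ) (A : Matrix (Fin N) (Fin T) ℝ) : Prop :=
  ∀ i, Δ * (∑ j, A i j) ≤ e i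

/-- `(X, A) ∈ C_soc`: the network (transformer capacity) constraint. -/
def memCsoc {N T : ℕ} (n_r : ℝ) (Cmax : Matrix (Fin 6) (Fin T) ℝ)
    (X : Matrix (Fin 3) (Fin N) ℝ) (A : Matrix (Fin N) (Fin T) ℝ) : Prop :=
  ∀ (i : Fin 3) (j : Fin T),
    ‖(Phi1 * (X * A).map ((↑) : ℝ → ℂ)) i j‖ ≤ Cmax (Fin.castAdd 3 i) j ∧
    ‖(Phi2 n_r * (X * A).map ((↑) : ℝ → ℂ)) i j‖ ≤ Cmax (Fin.addNat i 3) j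

/-- The feasible set `S` of problem (P1). -/
def feasibleP1 {N T : ℕ} (r_max Δ n_r : ℝ) (E : Matrix (Fin N) (Fin T) ℝ)
    (e : Fin N → ℝ) (Cmax : Matrix (Fin 6) (Fin T) ℝ)
    (X : Matrix (Fin 3) (Fin N) ℝ) (A : Matrix (Fin N) (Fin T) ℝ) : Prop :=
  memX X ∧ memCr r_max E A ∧ memCd Δ e A ∧ memCsoc n_r Cmax X A

/-- The objective `f(A) = -∑_{i,j} A_{i,j}` of problem (P1). -/
def objF {N T : ℕ} (A : Matrix (Fin N) (Fin T) ℝ) : ℝ := -∑ i, ∑ j, A i j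

/-- Feasibility in the relaxed problem (P2) with `M = I_T` and `W = r_max · E`. -/
def feasibleP2 {N T : ℕ} (r_max n_r : ℝ) (E : Matrix (Fin N) (Fin T) ℝ)
    (Cmax : Matrix (Fin 6) (Fin T) ℝ)
    (X : Matrix (Fin 3) (Fin N) ℝ) (P : Matrix (Fin 3) (Fin T) ℝ) : Prop :=
  memX X ∧ (∀ m j, 0 ≤ P m j) ∧ (∀ m j, P m j ≤ r_max * (X * E) m j) ∧
  ∀ (i : Fin 3) (j : Fin T),
    ‖(Phi1 * P.map ((↑) : ℝ → ℂ)) i j‖ ≤ Cmax (Fin.castAdd 3 i) j ∧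
    ‖(Phi2 n_r * P.map ((↑) : ℝ → ℂ)) i j‖ ≤ Cmax (Fin.addNat i 3) j

/-- The objective `g(P) = -∑_{m,j} P_{m,j}` of the relaxed problem (P2). -/
def objG {T : ℕ} (P : Matrix (Fin 3) (Fin T) ℝ) : ℝ := -∑ m, ∑ j, P m j
section StmtNineAux

variable {N T : ℕ}

lemma memX_nonneg {X : Matrix (Fin 3) (Fin N) ℝ} (hX : memX X) (m : Fin 3) (i : Fin N) :
    0 ≤ X m i := by rcases hX.1 m i with h | h <;> simp [h]

lemma memX_le_one {X : Matrix (Fin 3) (Fin N) ℝ} (hX : memX X) (m : Fin 3) (i : Fin N) :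
    X m i ≤ 1 := by rcases hX.1 m i with h | h <;> simp [h]

lemma memX_mul_off {X : Matrix (Fin 3) (Fin N) ℝ} (hX : memX X) (i : Fin N)
    {m m' : Fin 3} (hmm : m ≠ m') : X m i * X m' i = 0 := by
  have hs := hX.2 i
  rw [Fin.sum_univ_three] at hs
  rcases hX.1 0 i with h0 | h0 <;> rcases hX.1 1 i with h1 | h1 <;>
    rcases hX.1 2 i with h2 | h2 <;> fin_cases m <;> fin_cases m' <;> simp_all

lemma sum_mul_col {X : Matrix (Fin 3) (Fin N) ℝ} (hX : memX X)
    (A : Matrix (Fin N) (Fin T) ℝ) : ∑ m, ∑ j, (X * A) m j = ∑ i, ∑ j, A i j := by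
  simp only [Matrix.mul_apply]
  rw [Finset.sum_comm]
  have : ∀ j : Fin T, ∑ m, ∑ i, X m i * A i j = ∑ i, A i j := by
    intro j
    rw [Finset.sum_comm]
    simp_rw [← Finset.sum_mul]
    simp only [fun i => hX.2 i, one_mul]
  simp_rw [this]
  exact Finset.sum_comm

lemma forwardP1P2 {r_max Δ n_r : ℝ} {E : Matrix (Fin N) (Fin T) ℝ} {e : Fin N → ℝ}
    {Cmax : Matrix (Fin 6) (Fin T) ℝ} {X : Matrix (Fin 3) (Fin N) ℝ}
    {A : Matrix (Fin N) (Fin T) ℝ}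
    (h : feasibleP1 r_max Δ n_r E e Cmax X A) :
    feasibleP2 r_max n_r E Cmax X (X * A) ∧ objG (X * A) = objF A := by
  obtain ⟨hX, hcr, hcd, hsoc⟩ := h
  refine ⟨⟨hX, ?_, ?_, hsoc⟩, ?_⟩
  · intro m j
    rw [Matrix.mul_apply]
    exact Finset.sum_nonneg fun i _ => mul_nonneg (memX_nonneg hX m i) (hcr i j).1
  · intro m j
    rw [Matrix.mul_apply, Matrix.mul_apply, Finset.mul_sum]
    refine Finset.sum_le_sum fun i _ => ?_
    calc X m i * A i j ≤ X m i * (r_max * E i j) :=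
          mul_le_mul_of_nonneg_left (hcr i j).2 (memX_nonneg hX m i)
      _ = r_max * (X m i * E i j) := by ring
  · unfold objG objF
    rw [sum_mul_col hX A]

lemma backwardP2P1 {r_max Δ n_r : ℝ} (hr : 0 < r_max) (hΔ : 0 < Δ)
    {E : Matrix (Fin N) (Fin T) ℝ} (hE : ∀ i j, E i j = 0 ∨ E i j = 1)
    {e : Fin N → ℝ} {Cmax : Matrix (Fin 6) (Fin T) ℝ}
    (hzl : ∀ i, r_max * Δ * (∑ j, E i j) = e i)
    {X : Matrix (Fin 3) (Fin N) ℝ} {P : Matrix (Fin 3) (Fin T) ℝ}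
    (h : feasibleP2 r_max n_r E Cmax X P) :
    ∃ A, feasibleP1 r_max Δ n_r E e Cmax X A ∧ objF A = objG P := by
  obtain ⟨hX, hP0, hPle, hsoc⟩ := h
  have hE0 : ∀ i j, (0:ℝ) ≤ E i j := fun i j => by rcases hE i j with h | h <;> simp [h]
  have hXE0 : ∀ m j, 0 ≤ (X * E) m j := fun m j => by
    rw [Matrix.mul_apply]
    exact Finset.sum_nonneg fun i _ => mul_nonneg (memX_nonneg hX m i) (hE0 i j)
  set d : Fin 3 → Fin T → ℝ :=
    fun m j => if (X * E) m j = 0 then 0 else P m j / ((X * E) m j) with hd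
  have hd0 : ∀ m j, 0 ≤ d m j := by
    intro m j
    rw [hd]
    dsimp only
    split
    · exact le_refl 0
    · exact div_nonneg (hP0 m j) (hXE0 m j)
  have hdr : ∀ m j, d m j ≤ r_max := by
    intro m j
    rw [hd]
    dsimp only
    split
    · exact hr.le
    · rename_i hne
      rw [div_le_iff₀ (lt_of_le_of_ne (hXE0 m j) (Ne.symm hne))]
      exact hPle m j
  set A : Matrix (Fin N) (Fin T) ℝ := Matrix.of fun i j => E i j * ∑ m, X m i * d m j with hA
  have hAapp : ∀ i j, A i j = E i j * ∑ m, X m i * d m j := fun i j => rfl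
  have hsum_le : ∀ i j, ∑ m, X m i * d m j ≤ r_max := by
    intro i j
    calc ∑ m, X m i * d m j ≤ ∑ m, X m i * r_max :=
          Finset.sum_le_sum fun m _ => mul_le_mul_of_nonneg_left (hdr m j) (memX_nonneg hX m i)
      _ = r_max := by rw [← Finset.sum_mul, hX.2 i, one_mul]
  have hcr : memCr r_max E A := by
    intro i j
    rw [hAapp]
    constructor
    · exact mul_nonneg (hE0 i j) (Finset.sum_nonneg fun m _ =>
        mul_nonneg (memX_nonneg hX m i) (hd0 m j))
    · rw [mul_comm r_max (E i j)]
      exact mul_le_mul_of_nonneg_left (hsum_le i j) (hE0 i j)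
  have hkey : ∀ (m' : Fin 3) (i : Fin N) (j : Fin T),
      X m' i * ∑ m, X m i * d m j = X m' i * d m' j := by
    intro m' i j
    rw [Finset.mul_sum]
    rw [Finset.sum_eq_single m']
    · rcases hX.1 m' i with h | h <;> simp [h]
    · intro m _ hm
      rw [← mul_assoc, mul_comm (X m' i) (X m i), memX_mul_off hX i hm, zero_mul]
    · intro habs
      exact absurd (Finset.mem_univ m') habs
  have hXA : X * A = P := by
    ext m j
    rw [Matrix.mul_apply]
    have hterm : ∀ i, X m i * A i j = (X m i * E i j) * d m j := by
      intro i
      rw [hAapp]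
      rw [show X m i * (E i j * ∑ m', X m' i * d m' j)
          = E i j * (X m i * ∑ m', X m' i * d m' j) by ring, hkey m i j]
      ring
    simp_rw [hterm, ← Finset.sum_mul, ← Matrix.mul_apply]
    rw [hd]
    dsimp only
    split
    · rename_i h0
      rw [h0, zero_mul]
      have := hPle m j
      rw [h0, mul_zero] at this
      linarith [hP0 m j]
    · rename_i hne
      field_simp
  have hcd : memCd Δ e A := by
    intro i
    have h1 : ∑ j, A i j ≤ r_max * ∑ j, E i j := by
      rw [Finset.mul_sum]
      exact Finset.sum_le_sum fun j _ => (hcr i j).2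
    calc Δ * ∑ j, A i j ≤ Δ * (r_max * ∑ j, E i j) :=
          mul_le_mul_of_nonneg_left h1 hΔ.le
      _ = e i := by rw [← hzl i]; ring
  refine ⟨A, ⟨hX, hcr, hcd, ?_⟩, ?_⟩
  · intro i j
    rw [show (X * A) = P from hXA]
    exact hsoc i j
  · unfold objF objG
    rw [← sum_mul_col hX A, hXA]

end StmtNineAux

/-- Under zero laxity, the optimal values of (P1) and of the relaxed
problem (P2) with `M = I_T`, `W = r_max·E` coincide, and both minima are attained. -/
theorem stmt9 (N T : ℕ) (hN : 0 < N) (hT : 0 < T)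
    (r_max Δ n_r : ℝ) (hr : 0 < r_max) (hΔ : 0 < Δ) (hn : 0 < n_r)
    (E : Matrix (Fin N) (Fin T) ℝ) (hE : ∀ i j, E i j = 0 ∨ E i j = 1)
    (e : Fin N → ℝ) (he : ∀ i, 0 ≤ e i)
    (Cmax : Matrix (Fin 6) (Fin T) ℝ) (hC : ∀ i j, 0 ≤ Cmax i j)
    (hzl : ∀ i, r_max * Δ * (∑ j, E i j) = e i) :
    (∃ (X : Matrix (Fin 3) (Fin N) ℝ) (A : Matrix (Fin N) (Fin T) ℝ),
      feasibleP1 r_max Δ n_r E e Cmax X A ∧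
      objF A = sInf {v : ℝ | ∃ (X' : Matrix (Fin 3) (Fin N) ℝ)
          (A' : Matrix (Fin N) (Fin T) ℝ),
        feasibleP1 r_max Δ n_r E e Cmax X' A' ∧ v = objF A'}) ∧
    (∃ (X : Matrix (Fin 3) (Fin N) ℝ) (P : Matrix (Fin 3) (Fin T) ℝ),
      feasibleP2 r_max n_r E Cmax X P ∧
      objG P = sInf {v : ℝ | ∃ (X' : Matrix (Fin 3) (Fin N) ℝ)
          (P' : Matrix (Fin 3) (Fin T) ℝ),
        feasibleP2 r_max n_r E Cmax X' P' ∧ v = objG P'}) ∧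
    sInf {v : ℝ | ∃ (X' : Matrix (Fin 3) (Fin N) ℝ) (A' : Matrix (Fin N) (Fin T) ℝ),
        feasibleP1 r_max Δ n_r E e Cmax X' A' ∧ v = objF A'}
      = sInf {v : ℝ | ∃ (X' : Matrix (Fin 3) (Fin N) ℝ)
          (P' : Matrix (Fin 3) (Fin T) ℝ),
        feasibleP2 r_max n_r E Cmax X' P' ∧ v = objG P'} := by
  classical
  set V1 : Set ℝ := {v : ℝ | ∃ (X' : Matrix (Fin 3) (Fin N) ℝ)
      (A' : Matrix (Fin N) (Fin T) ℝ),
    feasibleP1 r_max Δ n_r E e Cmax X' A' ∧ v = objF A'} with hV1def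
  set V2 : Set ℝ := {v : ℝ | ∃ (X' : Matrix (Fin 3) (Fin N) ℝ)
      (P' : Matrix (Fin 3) (Fin T) ℝ),
    feasibleP2 r_max n_r E Cmax X' P' ∧ v = objG P'} with hV2def
  have hV : V1 = V2 := by
    ext v
    constructor
    · rintro ⟨X', A', hfa, rfl⟩
      obtain ⟨h2, hobj⟩ := forwardP1P2 hfa
      exact ⟨X', X' * A', h2, hobj.symm⟩
    · rintro ⟨X', P', hfp, rfl⟩
      obtain ⟨A', hfa, hobj⟩ := backwardP2P1 hr hΔ hE hzl hfp
      exact ⟨X', A', hfa, hobj.symm⟩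
  set S : Set (Matrix (Fin 3) (Fin N) ℝ × Matrix (Fin N) (Fin T) ℝ) :=
    {p | feasibleP1 r_max Δ n_r E e Cmax p.1 p.2} with hSdef
  have hc1 : ∀ (m : Fin 3) (i : Fin N),
      Continuous fun p : Matrix (Fin 3) (Fin N) ℝ × Matrix (Fin N) (Fin T) ℝ => p.1 m i :=
    fun m i => (continuous_apply i).comp ((continuous_apply m).comp continuous_fst)
  have hc2 : ∀ (i : Fin N) (j : Fin T),
      Continuous fun p : Matrix (Fin 3) (Fin N) ℝ × Matrix (Fin N) (Fin T) ℝ => p.2 i j :=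
    fun i j => (continuous_apply j).comp ((continuous_apply i).comp continuous_snd)
  have hcmul : Continuous fun p : Matrix (Fin 3) (Fin N) ℝ × Matrix (Fin N) (Fin T) ℝ =>
      (p.1 * p.2).map ((↑) : ℝ → ℂ) :=
    (continuous_fst.matrix_mul continuous_snd).matrix_map Complex.continuous_ofReal
  have hcsoc1 : ∀ (i : Fin 3) (j : Fin T),
      Continuous fun p : Matrix (Fin 3) (Fin N) ℝ × Matrix (Fin N) (Fin T) ℝ =>
        ‖(Phi1 * (p.1 * p.2).map ((↑) : ℝ → ℂ)) i j‖ :=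
    fun i j => continuous_norm.comp
      ((continuous_apply j).comp ((continuous_apply i).comp (continuous_const.matrix_mul hcmul)))
  have hcsoc2 : ∀ (i : Fin 3) (j : Fin T),
      Continuous fun p : Matrix (Fin 3) (Fin N) ℝ × Matrix (Fin N) (Fin T) ℝ =>
        ‖(Phi2 n_r * (p.1 * p.2).map ((↑) : ℝ → ℂ)) i j‖ :=
    fun i j => continuous_norm.comp
      ((continuous_apply j).comp ((continuous_apply i).comp (continuous_const.matrix_mul hcmul)))
  have hclosed : IsClosed S := by
    have hSeq : S =
        (⋂ m, ⋂ i, {p : Matrix (Fin 3) (Fin N) ℝ × Matrix (Fin N) (Fin T) ℝ |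
          p.1 m i = 0 ∨ p.1 m i = 1}) ∩
        ((⋂ i, {p : Matrix (Fin 3) (Fin N) ℝ × Matrix (Fin N) (Fin T) ℝ |
          (∑ m, p.1 m i) = 1}) ∩
        ((⋂ i, ⋂ j, {p : Matrix (Fin 3) (Fin N) ℝ × Matrix (Fin N) (Fin T) ℝ |
          0 ≤ p.2 i j ∧ p.2 i j ≤ r_max * E i j}) ∩
        ((⋂ i, {p : Matrix (Fin 3) (Fin N) ℝ × Matrix (Fin N) (Fin T) ℝ |
          Δ * (∑ j, p.2 i j) ≤ e i}) ∩
        (⋂ i, ⋂ j, {p : Matrix (Fin 3) (Fin N) ℝ × Matrix (Fin N) (Fin T) ℝ |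
          ‖(Phi1 * (p.1 * p.2).map ((↑) : ℝ → ℂ)) i j‖ ≤ Cmax (Fin.castAdd 3 i) j ∧
          ‖(Phi2 n_r * (p.1 * p.2).map ((↑) : ℝ → ℂ)) i j‖
            ≤ Cmax (Fin.addNat i 3) j})))) := by
      ext p
      simp only [hSdef, Set.mem_setOf_eq, Set.mem_inter_iff, Set.mem_iInter,
        feasibleP1, memX, memCr, memCd, memCsoc]
      tauto
    rw [hSeq]
    refine IsClosed.inter ?_ (IsClosed.inter ?_ (IsClosed.inter ?_ (IsClosed.inter ?_ ?_)))
    · exact isClosed_iInter fun m => isClosed_iInter fun i =>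
        (isClosed_eq (hc1 m i) continuous_const).union (isClosed_eq (hc1 m i) continuous_const)
    · exact isClosed_iInter fun i =>
        isClosed_eq (continuous_finset_sum _ fun m _ => hc1 m i) continuous_const
    · exact isClosed_iInter fun i => isClosed_iInter fun j =>
        (isClosed_le continuous_const (hc2 i j)).inter (isClosed_le (hc2 i j) continuous_const)
    · exact isClosed_iInter fun i =>
        isClosed_le (continuous_const.mul (continuous_finset_sum _ fun j _ => hc2 i j))
          continuous_const
    · exact isClosed_iInter fun i => isClosed_iInter fun j =>
        (isClosed_le (hcsoc1 i j) continuous_const).inter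
          (isClosed_le (hcsoc2 i j) continuous_const)
  set K : Set (Matrix (Fin 3) (Fin N) ℝ × Matrix (Fin N) (Fin T) ℝ) :=
    (Set.pi Set.univ fun _ : Fin 3 => Set.pi Set.univ fun _ : Fin N => Set.Icc (0:ℝ) 1)
      ×ˢ (Set.pi Set.univ fun _ : Fin N => Set.pi Set.univ fun _ : Fin T =>
            Set.Icc (0:ℝ) r_max) with hKdef
  have hK : IsCompact K :=
    IsCompact.prod
      (isCompact_univ_pi fun _ => isCompact_univ_pi fun _ => isCompact_Icc)
      (isCompact_univ_pi fun _ => isCompact_univ_pi fun _ => isCompact_Icc)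
  have hsub : S ⊆ K := by
    rintro ⟨X', A'⟩ hp
    obtain ⟨hX', hcr', -, -⟩ := hp
    refine Set.mem_prod.2 ⟨Set.mem_univ_pi.2 fun m => Set.mem_univ_pi.2 fun i => ?_,
      Set.mem_univ_pi.2 fun i => Set.mem_univ_pi.2 fun j => ?_⟩
    · exact ⟨memX_nonneg hX' m i, memX_le_one hX' m i⟩
    · refine ⟨(hcr' i j).1, (hcr' i j).2.trans ?_⟩
      rcases hE i j with hij | hij <;> rw [hij] <;> simp [hr.le]
  have hScpt : IsCompact S := hK.of_isClosed_subset hclosed hsub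
  have hSne : S.Nonempty := by
    refine ⟨⟨Matrix.of fun m i => if m = 0 then (1:ℝ) else 0, 0⟩, ?_⟩
    refine ⟨⟨fun m i => ?_, fun i => ?_⟩, fun i j => ?_, fun i => ?_, fun i j => ?_⟩
    · by_cases h : m = 0 <;> simp [Matrix.of_apply, h]
    · simp [Fin.sum_univ_three, Matrix.of_apply]
    · refine ⟨le_refl 0, ?_⟩
      rcases hE i j with h | h <;> simp [h, hr.le]
    · simpa using he i
    · constructor <;>
        · dsimp only
          simp only [Matrix.mul_apply, Matrix.map_apply, Matrix.zero_apply, mul_zero,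
            Finset.sum_const_zero, Complex.ofReal_zero, map_zero, norm_zero]
          exact hC _ j
  have hcont : Continuous fun p : Matrix (Fin 3) (Fin N) ℝ × Matrix (Fin N) (Fin T) ℝ =>
      objF p.2 := by
    unfold objF
    exact (continuous_finset_sum _ fun i _ => continuous_finset_sum _ fun j _ => hc2 i j).neg
  obtain ⟨p0, hp0S, hp0min⟩ := hScpt.exists_isMinOn hSne hcont.continuousOn
  have hfeas0 : feasibleP1 r_max Δ n_r E e Cmax p0.1 p0.2 := hp0S
  have hleast : IsLeast V1 (objF p0.2) := by
    constructor
    · exact ⟨p0.1, p0.2, hfeas0, rfl⟩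
    · rintro v ⟨X', A', h', rfl⟩
      exact isMinOn_iff.1 hp0min (X', A') h'
  have h1 : sInf V1 = objF p0.2 := hleast.csInf_eq
  have hleast2 : IsLeast V2 (objF p0.2) := hV ▸ hleast
  obtain ⟨Xq, Pq, hfq, hq⟩ := hleast2.1
  refine ⟨⟨p0.1, p0.2, hfeas0, h1.symm⟩, ⟨Xq, Pq, hfq, ?_⟩, by rw [hV]⟩
  rw [← hq, hleast2.csInf_eq]
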